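/- Let R be a semisimple commutative algebra spanned by a complete set of orthogonal idempotents {e_i}, and let P be a graded quiver with weight-0 subquiver Q, B = kQ its path algebra, and M_P = ⊕_{a, |a|>0} B a B the graded B-bimodule generated by the positive-weight arrows. Then M_P is a finitely generated projective B-bimodule and the graded path algebra kP is canonically isomorphic to the graded tensor algebra T_B M_P. -/

import Mathlib

/-!
STATEMENT 2: For a graded quiver `P` with weight-0 subquiver `Q`, `B = kQ`,
and `M_P = ⊕_{|a|>0} B a B ⊆ kP`, the bimodule `M_P` is a finitely generated
projective `B`-bimodule and `kP ≅ T_B M_P`.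

The graded path algebra `A = kP` is encoded by a basis of paths with the
concatenation product; `B` is the subalgebra generated by the weight-0 paths,
`M_P` the `B`-sub-bimodule of `A` generated by the positive-weight arrows.
Finite generation and projectivity are expressed concretely (retract of a
finite free bimodule), and `kP ≅ T_B M_P` through the universal property of
the tensor algebra.
-/

open Quiver TensorProduct MulOpposite

noncomputable section
namespace Stmt2

/-- The weight of a path is the sum of the weights of its arrows. -/
def pathWeight {V : Type} [Quiver.{1} V] (w : ∀ i j : V, (i ⟶ j) → ℕ) :
    ∀ {i j : V}, Quiver.Path i j → ℕ
  | _, _, .nil => 0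
  | _, _, .cons p a => pathWeight w p + w _ _ a

section Pre

variable {V : Type} [Quiver.{1} V] (w : ∀ i j : V, (i ⟶ j) → ℕ)

@[simp] lemma pathWeight_nil (i : V) :
    pathWeight w (Quiver.Path.nil : Quiver.Path i i) = 0 := by simp [pathWeight]

@[simp] lemma pathWeight_cons {i j l : V} (p : Quiver.Path i j) (a : j ⟶ l) :
    pathWeight w (p.cons a) = pathWeight w p + w _ _ a := by simp [pathWeight]

@[simp] lemma pathWeight_comp {i j l : V} (p : Quiver.Path i j) (q : Quiver.Path j l) :
    pathWeight w (p.comp q) = pathWeight w p + pathWeight w q := by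
  induction q with
  | nil => simp
  | cons q a ih => simp [Quiver.Path.comp_cons, ih]; omega

/-- Splitting data: a prefix `p`, a positive arrow `a`, and a weight-0 tail `q`. -/
structure SplitData (V : Type) [Quiver.{1} V] (i j : V) where
  l : V
  m : V
  p : Quiver.Path i l
  a : l ⟶ m
  q : Quiver.Path m j

/-- Extract the last positive-weight arrow of a path. -/
def split : ∀ {i j : V}, Quiver.Path i j → Option (SplitData V i j)
  | _, _, .nil => none
  | _, _, .cons p a =>
      if 0 < w _ _ a then some ⟨_, _, p, a, .nil⟩
      else (split p).map fun d => ⟨d.l, d.m, d.p, d.a, d.q.cons a⟩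

lemma split_none {i j : V} (r : Quiver.Path i j) :
    split w r = none ↔ pathWeight w r = 0 := by
  induction r with
  | nil => simp [split]
  | cons p a ih =>
      rw [split]
      by_cases h : 0 < w _ _ a
      · rw [if_pos h]
        simp only [pathWeight_cons]
        constructor
        · intro hc; cases hc
        · omega
      · rw [if_neg h]
        simp only [Option.map_eq_none_iff, ih, pathWeight_cons]
        omega

lemma split_spec {i j : V} (r : Quiver.Path i j) (d : SplitData V i j)
    (hd : split w r = some d) :
    r = (d.p.comp d.a.toPath).comp d.q ∧ 0 < w _ _ d.a ∧ pathWeight w d.q = 0 := by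
  induction r with
  | nil => simp [split] at hd
  | cons p a ih =>
      rw [split] at hd
      by_cases h : 0 < w _ _ a
      · rw [if_pos h] at hd
        cases hd
        exact ⟨rfl, h, by simp⟩
      · rw [if_neg h] at hd
        simp only [Option.map_eq_some_iff] at hd
        obtain ⟨d', hd', rfl⟩ := hd
        obtain ⟨h1, h2, h3⟩ := ih d' hd'
        exact ⟨by rw [h1]; rfl, h2, by simp [h3]; omega⟩

lemma split_comp {i j l : V} (r : Quiver.Path i j) (s : Quiver.Path j l)
    (hs : pathWeight w s = 0) :
    split w (r.comp s) = (split w r).map fun d => ⟨d.l, d.m, d.p, d.a, d.q.comp s⟩ := by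
  induction s with
  | nil =>
      show split w r = _
      rcases split w r with _ | d
      · rfl
      · rfl
  | cons s a ih =>
      have hs0 : pathWeight w s = 0 := by simp at hs; omega
      have ha0 : ¬ 0 < w _ _ a := by simp at hs; omega
      show split w ((r.comp s).cons a) = _
      rw [split, if_neg ha0, ih hs0, Option.map_map]
      rcases split w r with _ | d
      · rfl
      · rfl

lemma split_precomp {i j l : V} (s : Quiver.Path l i) (r : Quiver.Path i j)
    (d : SplitData V i j) (hd : split w r = some d) :
    split w (s.comp r) = some ⟨d.l, d.m, s.comp d.p, d.a, d.q⟩ := by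
  induction r with
  | nil => simp [split] at hd
  | cons r a ih =>
      rw [split] at hd
      by_cases h : 0 < w _ _ a
      · rw [if_pos h] at hd
        cases hd
        show split w ((s.comp r).cons a) = _
        rw [split, if_pos h]
      · rw [if_neg h] at hd
        simp only [Option.map_eq_some_iff] at hd
        obtain ⟨d', hd', rfl⟩ := hd
        show split w ((s.comp r).cons a) = _
        rw [split, if_neg h, ih d' hd']
        rfl

/-- Evaluation of a "monomial-wise" function on paths, multiplicatively. -/
def Fval {C : Type} [Mul C] (e : V → C) (u : ∀ i j : V, (i ⟶ j) → C) :
    ∀ {i j : V}, Quiver.Path i j → C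
  | i, _, .nil => e i
  | _, _, .cons p a => u _ _ a * Fval e u p

@[simp] lemma Fval_nil {C : Type} [Mul C] (e : V → C) (u : ∀ i j : V, (i ⟶ j) → C) (i : V) :
    Fval e u (Quiver.Path.nil : Quiver.Path i i) = e i := by simp [Fval]

@[simp] lemma Fval_cons {C : Type} [Mul C] (e : V → C) (u : ∀ i j : V, (i ⟶ j) → C)
    {i j l : V} (p : Quiver.Path i j) (a : j ⟶ l) :
    Fval e u (p.cons a) = u _ _ a * Fval e u p := by simp [Fval]

end Pre
set_option maxHeartbeats 2000000 in
set_option synthInstance.maxHeartbeats 400000 in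
theorem statement2
    (k : Type) [Field k]
    (V : Type) [Fintype V] [DecidableEq V] [Quiver.{1} V]
    [∀ i j : V, Fintype (i ⟶ j)]
    (w : ∀ i j : V, (i ⟶ j) → ℕ)
    (A : Type) [Ring A] [Algebra k A]
    (b : Module.Basis (Σ i j : V, Quiver.Path i j) k A)
    (hmul : ∀ (i j i' j' : V) (p : Quiver.Path i j) (q : Quiver.Path i' j'),
      b ⟨i, j, p⟩ * b ⟨i', j', q⟩ =
        if h : i = j' then b ⟨i', j, Quiver.Path.comp q (show Quiver.Path j' j from h ▸ p)⟩
        else 0)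
    (hone : (1 : A) = ∑ i : V, b ⟨i, i, Quiver.Path.nil⟩)
    -- `B = kQ`, the subalgebra spanned by the weight-0 paths
    (B : Subalgebra k A)
    (hB : B = Algebra.adjoin k
      {x | ∃ (i j : V) (p : Quiver.Path i j), pathWeight w p = 0 ∧ x = b ⟨i, j, p⟩})
    -- `M_P = ⊕_{|a| > 0} B a B`, the `B`-sub-bimodule generated by the
    -- positive-weight arrows
    (M : Submodule k A)
    (hM : M = Submodule.span k
      {x | ∃ (p q : B) (i j : V) (a : i ⟶ j),
        0 < w i j a ∧ x = (p : A) * b ⟨i, j, a.toPath⟩ * (q : A)}) :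
    -- (1) `M_P` is finitely generated as a `B`-bimodule;
    (∃ S : Finset A,
      M = Submodule.span k {x | ∃ (p q : B) (s : A), s ∈ S ∧ x = (p : A) * s * (q : A)}) ∧
    -- (2) `M_P` is a projective `B`-bimodule (a retract of a finite free
    -- `B`-bimodule `(B ⊗ Bᵐᵒᵖ)ⁿ`);
    (∃ (n : ℕ) (f : ↥M →ₗ[k] (Fin n → B ⊗[k] Bᵐᵒᵖ)) (g : (Fin n → B ⊗[k] Bᵐᵒᵖ) →ₗ[k] ↥M),
      (∀ x, g (f x) = x) ∧
      (∀ (p : B) (x y : ↥M), (y : A) = (p : A) * (x : A) →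
        f y = fun i => (p ⊗ₜ[k] (1 : Bᵐᵒᵖ)) * f x i) ∧
      (∀ (q : B) (x y : ↥M), (y : A) = (x : A) * (q : A) →
        f y = fun i => ((1 : B) ⊗ₜ[k] op q) * f x i) ∧
      (∀ (p : B) (v : Fin n → B ⊗[k] Bᵐᵒᵖ),
        ((g (fun i => (p ⊗ₜ[k] (1 : Bᵐᵒᵖ)) * v i) : ↥M) : A) = (p : A) * ((g v : ↥M) : A)) ∧
      (∀ (q : B) (v : Fin n → B ⊗[k] Bᵐᵒᵖ),
        ((g (fun i => ((1 : B) ⊗ₜ[k] op q) * v i) : ↥M) : A) = ((g v : ↥M) : A) * (q : A))) ∧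
    -- (3) `kP ≅ T_B M_P`: the inclusions `B ⊆ A`, `M_P ⊆ A` exhibit `A` as the
    -- tensor algebra of the `B`-bimodule `M_P`, via the universal property.
    (∀ (C : Type) [Ring C] [Algebra k C] (fB : B →ₐ[k] C) (fM : ↥M →ₗ[k] C),
      (∀ (p : B) (x y : ↥M), (y : A) = (p : A) * (x : A) → fM y = fB p * fM x) →
      (∀ (q : B) (x y : ↥M), (y : A) = (x : A) * (q : A) → fM y = fM x * fB q) →
      ∃! F : A →ₐ[k] C,
        (∀ p : B, F (p : A) = fB p) ∧ (∀ x : ↥M, F (x : A) = fM x)) := by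
  classical
  -- convenient multiplication lemmas
  have mul_b : ∀ {i j l : V} (p : Quiver.Path j l) (q : Quiver.Path i j),
      b ⟨j, l, p⟩ * b ⟨i, j, q⟩ = b ⟨i, l, q.comp p⟩ := by
    intro i j l p q
    rw [hmul, dif_pos rfl]
  have mul_b_ne : ∀ {i j i' j' : V} (p : Quiver.Path i j) (q : Quiver.Path i' j'),
      i ≠ j' → b ⟨i, j, p⟩ * b ⟨i', j', q⟩ = 0 := by
    intro i j i' j' p q h
    rw [hmul, dif_neg h]
  set SB : Set A :=
    {x | ∃ (i j : V) (p : Quiver.Path i j), pathWeight w p = 0 ∧ x = b ⟨i, j, p⟩} with hSB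
  have memB : ∀ {i j : V} (p : Quiver.Path i j), pathWeight w p = 0 → b ⟨i, j, p⟩ ∈ B := by
    intro i j p hp
    rw [hB]
    exact Algebra.subset_adjoin ⟨i, j, p, hp, rfl⟩
  have hBspan : Subalgebra.toSubmodule B = Submodule.span k SB := by
    have hmulSB : Submodule.span k SB * Submodule.span k SB ≤ Submodule.span k SB := by
      rw [Submodule.span_mul_span]
      apply Submodule.span_le.2
      rintro _ ⟨x, ⟨i, j, p, hp, rfl⟩, y, ⟨i', j', q, hq, rfl⟩, rfl⟩
      beta_reduce
      by_cases h : i = j'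
      · subst h
        rw [mul_b]
        exact Submodule.subset_span ⟨i', j, q.comp p, by simp [hp, hq], rfl⟩
      · rw [mul_b_ne _ _ h]
        exact (Submodule.span k SB).zero_mem
    rw [hB, Algebra.adjoin_eq_span]
    apply le_antisymm
    · apply Submodule.span_le.2
      intro x hx
      induction hx using Submonoid.closure_induction with
      | mem x hx => exact Submodule.subset_span hx
      | one =>
          rw [hone]
          exact Submodule.sum_mem _ fun i _ =>
            Submodule.subset_span ⟨i, i, Quiver.Path.nil, by simp, rfl⟩
      | mul x y hx hy ihx ihy => exact hmulSB (Submodule.mul_mem_mul ihx ihy)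
    · exact Submodule.span_mono fun x hx => Submonoid.subset_closure hx
  have memB' : ∀ x : A, x ∈ B ↔ x ∈ Submodule.span k SB := by
    intro x
    rw [← hBspan, Subalgebra.mem_toSubmodule]
  -- the set of paths with exactly one positive-weight arrow
  set D : Set (Σ i j : V, Quiver.Path i j) :=
    {z | ∃ d, split w z.2.2 = some d ∧ pathWeight w d.p = 0} with hD
  have memM : ∀ {i j l m : V} (p : Quiver.Path i l) (a : l ⟶ m) (q : Quiver.Path m j),
      pathWeight w p = 0 → 0 < w l m a → pathWeight w q = 0 →
      b ⟨i, j, (p.comp a.toPath).comp q⟩ ∈ M := by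
    intro i j l m p a q hp ha hq
    rw [hM]
    apply Submodule.subset_span
    refine ⟨⟨b ⟨m, j, q⟩, memB q hq⟩, ⟨b ⟨i, l, p⟩, memB p hp⟩, l, m, a, ha, ?_⟩
    show b ⟨i, j, _⟩ = b ⟨m, j, q⟩ * b ⟨l, m, a.toPath⟩ * b ⟨i, l, p⟩
    rw [mul_b, mul_b, Quiver.Path.comp_assoc]
  have memD : ∀ {i j l m : V} (p : Quiver.Path i l) (a : l ⟶ m) (q : Quiver.Path m j),
      pathWeight w p = 0 → 0 < w l m a → pathWeight w q = 0 →
      (⟨i, j, (p.comp a.toPath).comp q⟩ : Σ i j : V, Quiver.Path i j) ∈ D := by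
    intro i j l m p a q hp ha hq
    have h1 : split w (p.comp a.toPath) = some ⟨l, m, p, a, Quiver.Path.nil⟩ := by
      show split w (p.cons a) = _
      rw [split, if_pos ha]
    refine ⟨⟨l, m, p, a, Quiver.Path.nil.comp q⟩, ?_, hp⟩
    show split w ((p.comp a.toPath).comp q) = _
    rw [split_comp w _ _ hq, h1]
    rfl
  have bD_mem : ∀ z ∈ D, b z ∈ M := by
    rintro ⟨i, j, r⟩ ⟨d, hd, hdp⟩
    obtain ⟨h1, h2, h3⟩ := split_spec w r d hd
    rw [show (⟨i, j, r⟩ : Σ i j : V, Quiver.Path i j) = ⟨i, j, (d.p.comp d.a.toPath).comp d.q⟩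
      from by rw [← h1]]
    exact memM _ _ _ hdp h2 h3
  have hMspan : M = Submodule.span k (b '' D) := by
    apply le_antisymm
    · rw [hM]
      apply Submodule.span_le.2
      rintro _ ⟨p, q, i, j, a, ha, rfl⟩
      have hp := (memB' _).1 p.2
      have hq := (memB' _).1 q.2
      have key : ∀ x ∈ Submodule.span k SB, ∀ y ∈ Submodule.span k SB,
          x * b ⟨i, j, a.toPath⟩ * y ∈ Submodule.span k (b '' D) := by
        intro x hx
        induction hx using Submodule.span_induction with
        | mem x hx =>
            intro y hy
            induction hy using Submodule.span_induction with
            | mem y hy =>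
                obtain ⟨i1, j1, s, hs, rfl⟩ := hx
                obtain ⟨i2, j2, t, ht, rfl⟩ := hy
                by_cases h1 : i1 = j
                · subst h1
                  rw [mul_b]
                  by_cases h2 : i = j2
                  · subst h2
                    rw [mul_b]
                    apply Submodule.subset_span
                    exact ⟨⟨i2, j1, (t.comp a.toPath).comp s⟩, memD t a s ht ha hs,
                      by rw [Quiver.Path.comp_assoc]⟩
                  · rw [mul_b_ne _ _ h2]
                    exact Submodule.zero_mem _
                · rw [mul_b_ne _ _ h1, zero_mul]
                  exact Submodule.zero_mem _
            | zero => rw [mul_zero]; exact Submodule.zero_mem _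
            | add y z _ _ ihy ihz => rw [mul_add]; exact Submodule.add_mem _ ihy ihz
            | smul c y _ ihy => rw [mul_smul_comm]; exact Submodule.smul_mem _ c ihy
        | zero => intro y hy; rw [zero_mul, zero_mul]; exact Submodule.zero_mem _
        | add x z _ _ ihx ihz =>
            intro y hy
            rw [add_mul, add_mul]
            exact Submodule.add_mem _ (ihx y hy) (ihz y hy)
        | smul c x _ ihx =>
            intro y hy
            rw [smul_mul_assoc, smul_mul_assoc]
            exact Submodule.smul_mem _ c (ihx y hy)
      exact key _ hp _ hq
    · exact Submodule.span_le.2 (fun x hx => by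
        obtain ⟨z, hz, rfl⟩ := hx
        exact bD_mem z hz)
  -- a basis of M indexed by D
  have hli : LinearIndependent k (fun r : D => b r.1) :=
    b.linearIndependent.comp _ Subtype.val_injective
  have hrange : Submodule.span k (Set.range fun r : D => b r.1) = M := by
    rw [show (Set.range fun r : D => b r.1) = b '' D from by
      rw [show (fun r : D => b r.1) = b ∘ Subtype.val from rfl, Set.range_comp,
        Subtype.range_coe]]
    exact hMspan.symm
  let bM : Module.Basis D k M := (Module.Basis.span hli).map (LinearEquiv.ofEq _ _ hrange)
  have bM_coe : ∀ r : D, (bM r : A) = b r.1 := by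
    intro r
    show ((LinearEquiv.ofEq _ _ hrange) (Module.Basis.span hli r) : A) = b r.1
    rw [show ((LinearEquiv.ofEq _ _ hrange) (Module.Basis.span hli r) : A)
      = (Module.Basis.span hli r : A) from rfl, Module.Basis.span_apply]
  refine ⟨?_, ?_, ?_⟩
  · -- Part (1): finite generation
    refine ⟨Finset.image
      (fun t : Σ i j : V, {a : i ⟶ j // 0 < w i j a} => b ⟨t.1, t.2.1, (t.2.2 : t.1 ⟶ t.2.1).toPath⟩)
      Finset.univ, ?_⟩
    rw [hM]
    congr 1
    ext x
    constructor
    · rintro ⟨p, q, i, j, a, ha, rfl⟩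
      exact ⟨p, q, b ⟨i, j, a.toPath⟩,
        Finset.mem_image.2 ⟨⟨i, j, a, ha⟩, Finset.mem_univ _, rfl⟩, rfl⟩
    · rintro ⟨p, q, s, hs, rfl⟩
      obtain ⟨⟨i, j, a, ha⟩, -, rfl⟩ := Finset.mem_image.1 hs
      exact ⟨p, q, i, j, a, ha, rfl⟩
  · -- Part (2): projectivity
    have lmulM' : ∀ (pA : A), pA ∈ B → ∀ x ∈ M, pA * x ∈ M := by
      intro pA hp x hx
      rw [hM] at hx ⊢
      induction hx using Submodule.span_induction with
      | mem x hx =>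
          obtain ⟨P, Q, i, j, a, ha, rfl⟩ := hx
          exact Submodule.subset_span ⟨⟨pA, hp⟩ * P, Q, i, j, a, ha, by
            rw [MulMemClass.coe_mul]
            simp [mul_assoc]⟩
      | zero => simpa using Submodule.zero_mem _
      | add x y _ _ ihx ihy => rw [mul_add]; exact add_mem ihx ihy
      | smul c x _ ihx => rw [mul_smul_comm]; exact Submodule.smul_mem _ _ ihx
    have rmulM' : ∀ (qA : A), qA ∈ B → ∀ x ∈ M, x * qA ∈ M := by
      intro qA hq x hx
      rw [hM] at hx ⊢
      induction hx using Submodule.span_induction with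
      | mem x hx =>
          obtain ⟨P, Q, i, j, a, ha, rfl⟩ := hx
          exact Submodule.subset_span ⟨P, Q * ⟨qA, hq⟩, i, j, a, ha, by
            rw [MulMemClass.coe_mul]
            simp [mul_assoc]⟩
      | zero => simpa using Submodule.zero_mem _
      | add x y _ _ ihx ihy => rw [add_mul]; exact add_mem ihx ihy
      | smul c x _ ihx => rw [smul_mul_assoc]; exact Submodule.smul_mem _ _ ihx
    set PA := (Σ i j : V, {a : i ⟶ j // 0 < w i j a}) with hPA
    let bA : PA → A := fun t => b ⟨t.1, t.2.1, (t.2.2 : {a : t.1 ⟶ t.2.1 // 0 < w _ _ a}).1.toPath⟩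
    refine ⟨Fintype.card PA, ?_⟩
    let e : PA ≃ Fin (Fintype.card PA) := Fintype.equivFin PA
    have genM : ∀ (t : PA) (P Q : B), (P : A) * bA t * (Q : A) ∈ M := by
      intro t P Q
      rw [hM]
      exact Submodule.subset_span ⟨P, Q, t.1, t.2.1, t.2.2.1, t.2.2.2, rfl⟩
    let gt : PA → (B ⊗[k] Bᵐᵒᵖ →ₗ[k] ↥M) := fun t => TensorProduct.lift
      (LinearMap.mk₂ k
        (fun P Q => (⟨(P : A) * bA t * ((Q.unop : B) : A), genM t P Q.unop⟩ : ↥M))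
        (fun P P' Q => Subtype.ext (by simp [add_mul]))
        (fun c P Q => Subtype.ext (by simp [smul_mul_assoc]))
        (fun P Q Q' => Subtype.ext (by simp [mul_add]))
        (fun c P Q => Subtype.ext (by simp [mul_smul_comm])))
    have gt_tmul : ∀ (t : PA) (P : B) (Q : Bᵐᵒᵖ),
        ((gt t (P ⊗ₜ[k] Q) : ↥M) : A) = (P : A) * bA t * ((Q.unop : B) : A) := by
      intro t P Q
      simp [gt]
    let g0 : (PA → B ⊗[k] Bᵐᵒᵖ) →ₗ[k] ↥M := ∑ t : PA, (gt t).comp (LinearMap.proj t)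
    have g0_apply : ∀ v : PA → B ⊗[k] Bᵐᵒᵖ, g0 v = ∑ t : PA, gt t (v t) := by
      intro v
      simp [g0, LinearMap.sum_apply]
    let g : (Fin (Fintype.card PA) → B ⊗[k] Bᵐᵒᵖ) →ₗ[k] ↥M :=
      g0.comp (LinearMap.funLeft k _ ⇑e)
    -- the canonical vector attached to a basis element of M
    let dd : ∀ r : ↥D, SplitData V r.1.1 r.1.2.1 := fun r => r.2.choose
    have hdd : ∀ r : ↥D, split w r.1.2.2 = some (dd r) ∧ pathWeight w (dd r).p = 0 :=
      fun r => r.2.choose_spec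
    have hq0 : ∀ r : ↥D, pathWeight w (dd r).q = 0 :=
      fun r => (split_spec w _ _ (hdd r).1).2.2
    have hpos : ∀ r : ↥D, 0 < w _ _ (dd r).a :=
      fun r => (split_spec w _ _ (hdd r).1).2.1
    let f0vAux : ∀ (i j : V) (d : SplitData V i j), 0 < w d.l d.m d.a →
        pathWeight w d.p = 0 → pathWeight w d.q = 0 → (PA → B ⊗[k] Bᵐᵒᵖ) :=
      fun i j d ha hp hq =>
        Pi.single ⟨d.l, d.m, ⟨d.a, ha⟩⟩
          ((⟨b ⟨d.m, j, d.q⟩, memB _ hq⟩ : B) ⊗ₜ[k] op (⟨b ⟨i, d.l, d.p⟩, memB _ hp⟩ : B))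
    have f0vAux_congr : ∀ (i j : V) (d d' : SplitData V i j) (h : d = d')
        (ha : 0 < w d.l d.m d.a) (hp : pathWeight w d.p = 0) (hq : pathWeight w d.q = 0)
        (ha' : 0 < w d'.l d'.m d'.a) (hp' : pathWeight w d'.p = 0)
        (hq' : pathWeight w d'.q = 0),
        f0vAux i j d ha hp hq = f0vAux i j d' ha' hp' hq' := by
      intro i j d d' h
      subst h
      intro _ _ _ _ _ _
      rfl
    let f0v : ↥D → (PA → B ⊗[k] Bᵐᵒᵖ) := fun r =>
      f0vAux r.1.1 r.1.2.1 (dd r) (hpos r) (hdd r).2 (hq0 r)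
    have f0v_eq : ∀ (r : ↥D) (l m : V) (p : Quiver.Path r.1.1 l) (a : l ⟶ m)
        (q : Quiver.Path m r.1.2.1) (hsp : split w r.1.2.2 = some ⟨l, m, p, a, q⟩)
        (ha : 0 < w l m a) (hp : pathWeight w p = 0) (hq : pathWeight w q = 0),
        f0v r = f0vAux r.1.1 r.1.2.1 ⟨l, m, p, a, q⟩ ha hp hq := by
      intro r l m p a q hsp ha hp hq
      have hd : dd r = ⟨l, m, p, a, q⟩ := by
        apply Option.some_injective
        rw [← (hdd r).1, hsp]
      exact f0vAux_congr r.1.1 r.1.2.1 (dd r) ⟨l, m, p, a, q⟩ hd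
        (hpos r) (hdd r).2 (hq0 r) ha hp hq
    let f0 : ↥M →ₗ[k] (PA → B ⊗[k] Bᵐᵒᵖ) := bM.constr k f0v
    have hf0 : ∀ r : ↥D, f0 (bM r) = f0v r := fun r => bM.constr_basis k f0v r
    let f : ↥M →ₗ[k] (Fin (Fintype.card PA) → B ⊗[k] Bᵐᵒᵖ) :=
      (LinearMap.funLeft k _ ⇑e.symm).comp f0
    refine ⟨f, g, ?_, ?_, ?_, ?_, ?_⟩
    · -- g ∘ f = id
      intro x
      have h1 : g (f x) = g0 (f0 x) := by
        show g0 (((f0 x) ∘ ⇑e.symm) ∘ ⇑e) = g0 (f0 x)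
        congr 1
        funext t
        simp
      rw [h1]
      have hgf : g0.comp f0 = LinearMap.id := by
        apply Module.Basis.ext bM
        intro r
        obtain ⟨⟨i, j, rp⟩, hr⟩ := r
        obtain ⟨⟨l, m, pp, aa, qq⟩, hsp, hp0⟩ := hr
        set r : ↥D := ⟨⟨i, j, rp⟩, ⟨⟨l, m, pp, aa, qq⟩, hsp, hp0⟩⟩ with hrdef
        obtain ⟨hdec, hapos, hq0'⟩ := split_spec w rp _ hsp
        show g0 (f0 (bM r)) = bM r
        rw [hf0, f0v_eq r l m pp aa qq hsp hapos hp0 hq0', g0_apply]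
        simp only [f0vAux]
        rw [Finset.sum_eq_single (⟨l, m, ⟨aa, hapos⟩⟩ : PA)]
        · apply Subtype.ext
          rw [Pi.single_eq_same, gt_tmul]
          show b ⟨m, j, qq⟩ * b ⟨l, m, aa.toPath⟩ * b ⟨i, l, pp⟩ = ((bM r : ↥M) : A)
          rw [mul_b, mul_b, ← Quiver.Path.comp_assoc, bM_coe]
          exact congrArg (fun pth => b ⟨i, j, pth⟩) hdec.symm
        · intro t _ ht
          rw [Pi.single_eq_of_ne ht, (gt t).map_zero]
        · intro h
          exact absurd (Finset.mem_univ _) h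
      exact LinearMap.congr_fun hgf x
    · -- left equivariance of f
      have claim : ∀ (pA : A) (hpA : pA ∈ Submodule.span k SB) (x : ↥M),
          f0 ⟨pA * (x : A), lmulM' pA ((memB' _).2 hpA) _ x.2⟩
            = fun t => ((⟨pA, (memB' pA).2 hpA⟩ : B) ⊗ₜ[k] (1 : Bᵐᵒᵖ)) * f0 x t := by
        intro pA hpA
        induction hpA using Submodule.span_induction with
        | mem z hz =>
            obtain ⟨i', j', s, hs, rfl⟩ := hz
            have hsB : b ⟨i', j', s⟩ ∈ B := memB s hs
            let LB : ↥M →ₗ[k] ↥M :=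
              { toFun := fun x => ⟨b ⟨i', j', s⟩ * (x : A), lmulM' _ hsB _ x.2⟩
                map_add' := fun x y => Subtype.ext (by simp [mul_add])
                map_smul' := fun c x => Subtype.ext (by simp [mul_smul_comm]) }
            let RT : (PA → B ⊗[k] Bᵐᵒᵖ) →ₗ[k] (PA → B ⊗[k] Bᵐᵒᵖ) :=
              { toFun := fun v t => ((⟨b ⟨i', j', s⟩, hsB⟩ : B) ⊗ₜ[k] (1 : Bᵐᵒᵖ)) * v t
                map_add' := fun v v' => by funext t; simp [mul_add]
                map_smul' := fun c v => by funext t; simp [mul_smul_comm] }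
            have RT_apply : ∀ (v : PA → B ⊗[k] Bᵐᵒᵖ) (t : PA),
                RT v t = ((⟨b ⟨i', j', s⟩, hsB⟩ : B) ⊗ₜ[k] (1 : Bᵐᵒᵖ)) * v t :=
              fun _ _ => rfl
            have key : f0.comp LB = RT.comp f0 := by
              apply Module.Basis.ext bM
              intro r
              obtain ⟨⟨i, j, rp⟩, hr⟩ := r
              obtain ⟨⟨l, m, pp, aa, qq⟩, hsp, hp0⟩ := hr
              set r : ↥D := ⟨⟨i, j, rp⟩, ⟨⟨l, m, pp, aa, qq⟩, hsp, hp0⟩⟩ with hrdef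
              obtain ⟨hdec, hapos, hqq0⟩ := split_spec w rp _ hsp
              show f0 (LB (bM r)) = RT (f0 (bM r))
              rw [hf0, f0v_eq r l m pp aa qq hsp hapos hp0 hqq0]
              by_cases hc : i' = j
              · subst hc
                have hz2 : split w (rp.comp s) = some ⟨l, m, pp, aa, qq.comp s⟩ := by
                  rw [split_comp w rp s hs, hsp]
                  rfl
                have hmemD : (⟨i, j', rp.comp s⟩ : Σ i j : V, Quiver.Path i j) ∈ D :=
                  ⟨_, hz2, hp0⟩
                set r' : ↥D := ⟨⟨i, j', rp.comp s⟩, hmemD⟩ with hr'def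
                have hLB : LB (bM r) = bM r' := by
                  apply Subtype.ext
                  show b ⟨i', j', s⟩ * ((bM r : ↥M) : A) = ((bM r' : ↥M) : A)
                  rw [bM_coe, bM_coe]
                  exact mul_b s rp
                rw [hLB, hf0,
                  f0v_eq r' l m pp aa (qq.comp s) hz2 hapos hp0 (by simp [hqq0, hs])]
                simp only [f0vAux]
                funext t
                rw [RT_apply]
                by_cases ht : t = (⟨l, m, ⟨aa, hapos⟩⟩ : PA)
                · subst ht
                  rw [Pi.single_eq_same, Pi.single_eq_same,
                    Algebra.TensorProduct.tmul_mul_tmul, one_mul]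
                  congr 1
                  apply Subtype.ext
                  rw [MulMemClass.coe_mul]
                  exact (mul_b s qq).symm
                · rw [Pi.single_eq_of_ne ht, Pi.single_eq_of_ne ht, mul_zero]
              · -- non-composable case
                have hLB : LB (bM r) = 0 := by
                  apply Subtype.ext
                  show b ⟨i', j', s⟩ * ((bM r : ↥M) : A) = ((0 : ↥M) : A)
                  rw [bM_coe]
                  show b ⟨i', j', s⟩ * b ⟨i, j, rp⟩ = _
                  rw [mul_b_ne s rp hc]
                  rfl
                rw [hLB, f0.map_zero]
                simp only [f0vAux]
                funext t
                rw [RT_apply]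
                by_cases ht : t = (⟨l, m, ⟨aa, hapos⟩⟩ : PA)
                · subst ht
                  rw [Pi.single_eq_same, Algebra.TensorProduct.tmul_mul_tmul, one_mul]
                  have hzz : (⟨b ⟨i', j', s⟩, hsB⟩ : B) *
                      (⟨b ⟨m, j, qq⟩, memB _ hqq0⟩ : B) = 0 :=
                    Subtype.ext (by rw [MulMemClass.coe_mul]; exact mul_b_ne _ _ hc)
                  rw [hzz, TensorProduct.zero_tmul]
                  rfl
                · rw [Pi.single_eq_of_ne ht, mul_zero]
                  rfl
            intro x
            exact LinearMap.congr_fun key x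
        | zero =>
            intro x
            have h0 : ∀ h, (⟨(0 : A) * (x : A), h⟩ : ↥M) = (0 : ↥M) :=
              fun _ => Subtype.ext (by simp)
            rw [h0, f0.map_zero]
            funext t
            have hz : (⟨(0 : A), (memB' (0:A)).2 (Submodule.zero_mem _)⟩ : B) = 0 := rfl
            rw [hz, TensorProduct.zero_tmul, zero_mul]
            rfl
        | add z z' hz hz' ihz ihz' =>
            intro x
            have hsplit : ∀ h,
                (⟨(z + z') * (x : A), h⟩ : ↥M)
                = (⟨z * (x : A), lmulM' z ((memB' _).2 hz) _ x.2⟩ : ↥M)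
                  + (⟨z' * (x : A), lmulM' z' ((memB' _).2 hz') _ x.2⟩ : ↥M) :=
              fun _ => Subtype.ext (by simp [add_mul])
            rw [hsplit, f0.map_add, ihz x, ihz' x]
            funext t
            have hsum : (⟨z + z', (memB' (z + z')).2 (Submodule.add_mem _ hz hz')⟩ : B)
                = (⟨z, (memB' z).2 hz⟩ : B) + (⟨z', (memB' z').2 hz'⟩ : B) := rfl
            rw [Pi.add_apply, hsum, TensorProduct.add_tmul, add_mul]
        | smul c z hz ihz =>
            intro x
            have hsplit : ∀ h, (⟨(c • z) * (x : A), h⟩ : ↥M)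
                = c • (⟨z * (x : A), lmulM' z ((memB' _).2 hz) _ x.2⟩ : ↥M) :=
              fun _ => Subtype.ext (by simp [smul_mul_assoc])
            rw [hsplit, f0.map_smul, ihz x]
            funext t
            have hsm : (⟨c • z, (memB' (c • z)).2 (Submodule.smul_mem _ c hz)⟩ : B)
                = c • (⟨z, (memB' z).2 hz⟩ : B) := rfl
            rw [Pi.smul_apply, hsm, ← TensorProduct.smul_tmul', smul_mul_assoc]
      intro p x y hxy
      have hy : y = ⟨(p : A) * (x : A), lmulM' _ ((memB' _).2 ((memB' _).1 p.2)) _ x.2⟩ :=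
        Subtype.ext hxy
      rw [hy]
      funext i
      show f0 _ (e.symm i) = (p ⊗ₜ[k] (1 : Bᵐᵒᵖ)) * (f0 x (e.symm i))
      rw [claim ((p : A)) ((memB' _).1 p.2) x]
    · -- right equivariance of f
      have claim : ∀ (qA : A) (hqA : qA ∈ Submodule.span k SB) (x : ↥M),
          f0 ⟨(x : A) * qA, rmulM' qA ((memB' _).2 hqA) _ x.2⟩
            = fun t => ((1 : B) ⊗ₜ[k] op (⟨qA, (memB' qA).2 hqA⟩ : B)) * f0 x t := by
        intro qA hqA
        induction hqA using Submodule.span_induction with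
        | mem z hz =>
            obtain ⟨i', j', s, hs, rfl⟩ := hz
            have hsB : b ⟨i', j', s⟩ ∈ B := memB s hs
            let RB : ↥M →ₗ[k] ↥M :=
              { toFun := fun x => ⟨(x : A) * b ⟨i', j', s⟩, rmulM' _ hsB _ x.2⟩
                map_add' := fun x y => Subtype.ext (by simp [add_mul])
                map_smul' := fun c x => Subtype.ext (by simp [smul_mul_assoc]) }
            let RT : (PA → B ⊗[k] Bᵐᵒᵖ) →ₗ[k] (PA → B ⊗[k] Bᵐᵒᵖ) :=
              { toFun := fun v t => ((1 : B) ⊗ₜ[k] op (⟨b ⟨i', j', s⟩, hsB⟩ : B)) * v t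
                map_add' := fun v v' => by funext t; simp [mul_add]
                map_smul' := fun c v => by funext t; simp [mul_smul_comm] }
            have RT_apply : ∀ (v : PA → B ⊗[k] Bᵐᵒᵖ) (t : PA),
                RT v t = ((1 : B) ⊗ₜ[k] op (⟨b ⟨i', j', s⟩, hsB⟩ : B)) * v t :=
              fun _ _ => rfl
            have key : f0.comp RB = RT.comp f0 := by
              apply Module.Basis.ext bM
              intro r
              obtain ⟨⟨i, j, rp⟩, hr⟩ := r
              obtain ⟨⟨l, m, pp, aa, qq⟩, hsp, hp0⟩ := hr
              set r : ↥D := ⟨⟨i, j, rp⟩, ⟨⟨l, m, pp, aa, qq⟩, hsp, hp0⟩⟩ with hrdef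
              obtain ⟨hdec, hapos, hqq0⟩ := split_spec w rp _ hsp
              show f0 (RB (bM r)) = RT (f0 (bM r))
              rw [hf0, f0v_eq r l m pp aa qq hsp hapos hp0 hqq0]
              by_cases hc : i = j'
              · subst hc
                have hz2 : split w (s.comp rp) = some ⟨l, m, s.comp pp, aa, qq⟩ :=
                  split_precomp w s rp _ hsp
                have hmemD : (⟨i', j, s.comp rp⟩ : Σ i j : V, Quiver.Path i j) ∈ D :=
                  ⟨_, hz2, by simp [hp0, hs]⟩
                set r' : ↥D := ⟨⟨i', j, s.comp rp⟩, hmemD⟩ with hr'def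
                have hRB : RB (bM r) = bM r' := by
                  apply Subtype.ext
                  show ((bM r : ↥M) : A) * b ⟨i', i, s⟩ = ((bM r' : ↥M) : A)
                  rw [bM_coe, bM_coe]
                  exact mul_b rp s
                rw [hRB, hf0,
                  f0v_eq r' l m (s.comp pp) aa qq hz2 hapos (by simp [hp0, hs]) hqq0]
                simp only [f0vAux]
                funext t
                rw [RT_apply]
                by_cases ht : t = (⟨l, m, ⟨aa, hapos⟩⟩ : PA)
                · subst ht
                  rw [Pi.single_eq_same, Pi.single_eq_same,
                    Algebra.TensorProduct.tmul_mul_tmul, one_mul, ← MulOpposite.op_mul]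
                  congr 2
                  apply Subtype.ext
                  rw [MulMemClass.coe_mul]
                  exact (mul_b pp s).symm
                · rw [Pi.single_eq_of_ne ht, Pi.single_eq_of_ne ht, mul_zero]
              · -- non-composable case
                have hRB : RB (bM r) = 0 := by
                  apply Subtype.ext
                  show ((bM r : ↥M) : A) * b ⟨i', j', s⟩ = ((0 : ↥M) : A)
                  rw [bM_coe]
                  show b ⟨i, j, rp⟩ * b ⟨i', j', s⟩ = _
                  rw [mul_b_ne rp s hc]
                  rfl
                rw [hRB, f0.map_zero]
                simp only [f0vAux]
                funext t
                rw [RT_apply]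
                by_cases ht : t = (⟨l, m, ⟨aa, hapos⟩⟩ : PA)
                · subst ht
                  rw [Pi.single_eq_same, Algebra.TensorProduct.tmul_mul_tmul, one_mul,
                    ← MulOpposite.op_mul]
                  have hzz : (⟨b ⟨i, l, pp⟩, memB _ hp0⟩ : B) *
                      (⟨b ⟨i', j', s⟩, hsB⟩ : B) = 0 :=
                    Subtype.ext (by rw [MulMemClass.coe_mul]; exact mul_b_ne _ _ hc)
                  rw [hzz, MulOpposite.op_zero, TensorProduct.tmul_zero]
                  rfl
                · rw [Pi.single_eq_of_ne ht, mul_zero]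
                  rfl
            intro x
            exact LinearMap.congr_fun key x
        | zero =>
            intro x
            have h0 : ∀ h, (⟨(x : A) * (0 : A), h⟩ : ↥M) = (0 : ↥M) :=
              fun _ => Subtype.ext (by simp)
            rw [h0, f0.map_zero]
            funext t
            have hz : (⟨(0 : A), (memB' (0:A)).2 (Submodule.zero_mem _)⟩ : B) = 0 := rfl
            rw [hz, MulOpposite.op_zero, TensorProduct.tmul_zero, zero_mul]
            rfl
        | add z z' hz hz' ihz ihz' =>
            intro x
            have hsplit : ∀ h,
                (⟨(x : A) * (z + z'), h⟩ : ↥M)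
                = (⟨(x : A) * z, rmulM' z ((memB' _).2 hz) _ x.2⟩ : ↥M)
                  + (⟨(x : A) * z', rmulM' z' ((memB' _).2 hz') _ x.2⟩ : ↥M) :=
              fun _ => Subtype.ext (by simp [mul_add])
            rw [hsplit, f0.map_add, ihz x, ihz' x]
            funext t
            have hsum : (⟨z + z', (memB' (z + z')).2 (Submodule.add_mem _ hz hz')⟩ : B)
                = (⟨z, (memB' z).2 hz⟩ : B) + (⟨z', (memB' z').2 hz'⟩ : B) := rfl
            rw [Pi.add_apply, hsum, MulOpposite.op_add, TensorProduct.tmul_add, add_mul]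
        | smul c z hz ihz =>
            intro x
            have hsplit : ∀ h, (⟨(x : A) * (c • z), h⟩ : ↥M)
                = c • (⟨(x : A) * z, rmulM' z ((memB' _).2 hz) _ x.2⟩ : ↥M) :=
              fun _ => Subtype.ext (by simp [mul_smul_comm])
            rw [hsplit, f0.map_smul, ihz x]
            funext t
            have hsm : (⟨c • z, (memB' (c • z)).2 (Submodule.smul_mem _ c hz)⟩ : B)
                = c • (⟨z, (memB' z).2 hz⟩ : B) := rfl
            rw [Pi.smul_apply, hsm, MulOpposite.op_smul, TensorProduct.tmul_smul,
              smul_mul_assoc]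
      intro q x y hxy
      have hy : y = ⟨(x : A) * (q : A), rmulM' _ ((memB' _).2 ((memB' _).1 q.2)) _ x.2⟩ :=
        Subtype.ext hxy
      rw [hy]
      funext i
      show f0 _ (e.symm i) = ((1 : B) ⊗ₜ[k] op q) * (f0 x (e.symm i))
      rw [claim ((q : A)) ((memB' _).1 q.2) x]
    · -- left equivariance of g
      intro p v
      have hper : ∀ (t : PA) (z : B ⊗[k] Bᵐᵒᵖ),
          ((gt t ((p ⊗ₜ[k] (1 : Bᵐᵒᵖ)) * z) : ↥M) : A) = (p : A) * ((gt t z : ↥M) : A) := by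
        intro t z
        induction z using TensorProduct.induction_on with
        | zero => simp
        | tmul P Q =>
            rw [Algebra.TensorProduct.tmul_mul_tmul, one_mul, gt_tmul, gt_tmul,
              MulMemClass.coe_mul]
            simp [mul_assoc]
        | add z z' ihz ihz' =>
            rw [mul_add, (gt t).map_add, (gt t).map_add, Submodule.coe_add, Submodule.coe_add,
              mul_add, ihz, ihz']
      show ((g0 ((fun i => (p ⊗ₜ[k] (1:Bᵐᵒᵖ)) * v i) ∘ ⇑e) : ↥M) : A)
        = (p : A) * ((g0 (v ∘ ⇑e)) : A)
      rw [g0_apply, g0_apply, AddSubmonoidClass.coe_finset_sum,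
        AddSubmonoidClass.coe_finset_sum, Finset.mul_sum]
      exact Finset.sum_congr rfl fun t _ => hper t (v (e t))
    · -- right equivariance of g
      intro q v
      have hper : ∀ (t : PA) (z : B ⊗[k] Bᵐᵒᵖ),
          ((gt t (((1 : B) ⊗ₜ[k] op q) * z) : ↥M) : A) = ((gt t z : ↥M) : A) * (q : A) := by
        intro t z
        induction z using TensorProduct.induction_on with
        | zero => simp
        | tmul P Q =>
            rw [Algebra.TensorProduct.tmul_mul_tmul, one_mul, gt_tmul, gt_tmul]
            rw [show (op q * Q).unop = Q.unop * q from rfl, MulMemClass.coe_mul]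
            simp [mul_assoc]
        | add z z' ihz ihz' =>
            rw [mul_add, (gt t).map_add, (gt t).map_add, Submodule.coe_add, Submodule.coe_add,
              add_mul, ihz, ihz']
      show ((g0 ((fun i => ((1:B) ⊗ₜ[k] op q) * v i) ∘ ⇑e) : ↥M) : A)
        = ((g0 (v ∘ ⇑e)) : A) * (q : A)
      rw [g0_apply, g0_apply, AddSubmonoidClass.coe_finset_sum,
        AddSubmonoidClass.coe_finset_sum, Finset.sum_mul]
      exact Finset.sum_congr rfl fun t _ => hper t (v (e t))
  · -- Part (3): universal property of the tensor algebra
    intro C _ _ fB fM hL hR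
    have arrM : ∀ {i j : V} (a : i ⟶ j), 0 < w i j a → b ⟨i, j, a.toPath⟩ ∈ M :=
      fun a ha => memM Quiver.Path.nil a Quiver.Path.nil (by simp) ha (by simp)
    have arrB : ∀ {i j : V} (a : i ⟶ j), ¬ 0 < w i j a → b ⟨i, j, a.toPath⟩ ∈ B :=
      fun {i j} a ha => memB _ (by
        show pathWeight w (Quiver.Path.nil.cons a) = 0
        simp
        omega)
    have nilB : ∀ i : V, b ⟨i, i, Quiver.Path.nil⟩ ∈ B := fun i => memB _ (by simp)
    let u : ∀ i j : V, (i ⟶ j) → C := fun i j a =>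
      if h : 0 < w i j a then fM ⟨b ⟨i, j, a.toPath⟩, arrM a h⟩
      else fB ⟨b ⟨i, j, a.toPath⟩, arrB a h⟩
    let eC : V → C := fun i => fB ⟨b ⟨i, i, Quiver.Path.nil⟩, nilB i⟩
    have eC_apply : ∀ i : V, eC i = fB ⟨b ⟨i, i, Quiver.Path.nil⟩, nilB i⟩ := fun _ => rfl
    -- values of Fval on weight-0 paths
    have Fv_zero : ∀ {i j : V} (p : Quiver.Path i j) (hp : pathWeight w p = 0),
        Fval eC u p = fB ⟨b ⟨i, j, p⟩, memB p hp⟩ := by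
      intro i j p hp
      induction p with
      | nil => rw [Fval_nil]
      | cons p a ih =>
          have ha : ¬ 0 < w _ _ a := by simp at hp; omega
          have hp0 : pathWeight w p = 0 := by simp at hp; omega
          rw [Fval_cons]
          show u _ _ a * Fval eC u p = _
          rw [ih hp0, show u _ _ a = fB ⟨b ⟨_, _, a.toPath⟩, arrB a ha⟩ from dif_neg ha,
            ← map_mul]
          congr 1
          apply Subtype.ext
          rw [MulMemClass.coe_mul]
          exact mul_b a.toPath p
    -- left and right unit laws
    have Fv_e_left : ∀ {i j : V} (p : Quiver.Path i j),
        fB ⟨b ⟨j, j, Quiver.Path.nil⟩, nilB j⟩ * Fval eC u p = Fval eC u p := by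
      intro i j p
      induction p with
      | nil =>
          rw [Fval_nil, eC_apply, ← map_mul]
          congr 1
          apply Subtype.ext
          rw [MulMemClass.coe_mul]
          exact mul_b Quiver.Path.nil Quiver.Path.nil
      | cons p a ih =>
          rw [Fval_cons, ← mul_assoc]
          congr 1
          show fB _ * u _ _ a = u _ _ a
          by_cases h : 0 < w _ _ a
          · rw [show u _ _ a = fM ⟨b ⟨_, _, a.toPath⟩, arrM a h⟩ from dif_pos h]
            exact (hL _ _ _ ((mul_b Quiver.Path.nil a.toPath).symm)).symm
          · rw [show u _ _ a = fB ⟨b ⟨_, _, a.toPath⟩, arrB a h⟩ from dif_neg h, ← map_mul]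
            congr 1
            apply Subtype.ext
            rw [MulMemClass.coe_mul]
            exact mul_b Quiver.Path.nil a.toPath
    have Fv_e_right : ∀ {i j : V} (p : Quiver.Path i j),
        Fval eC u p * fB ⟨b ⟨i, i, Quiver.Path.nil⟩, nilB i⟩ = Fval eC u p := by
      intro i j p
      induction p with
      | nil =>
          rw [Fval_nil, eC_apply, ← map_mul]
          congr 1
          apply Subtype.ext
          rw [MulMemClass.coe_mul]
          exact mul_b Quiver.Path.nil Quiver.Path.nil
      | cons p a ih =>
          rw [Fval_cons, mul_assoc, ih]
    -- multiplicativity on composable paths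
    have Fv_comp : ∀ {i j l : V} (q : Quiver.Path i j) (p : Quiver.Path j l),
        Fval eC u (q.comp p) = Fval eC u p * Fval eC u q := by
      intro i j l q p
      induction p with
      | nil =>
          show Fval eC u q = Fval eC u Quiver.Path.nil * Fval eC u q
          rw [Fval_nil, eC_apply]
          exact (Fv_e_left q).symm
      | cons p a ih =>
          show Fval eC u ((q.comp p).cons a) = _
          rw [Fval_cons, Fval_cons, ih, mul_assoc]
    -- orthogonality
    have Fv_orth : ∀ {i j i' j' : V} (p : Quiver.Path i j) (q : Quiver.Path i' j'),
        i ≠ j' → Fval eC u p * Fval eC u q = 0 := by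
      intro i j i' j' p q h
      rw [← Fv_e_right p, ← Fv_e_left q, mul_assoc, ← mul_assoc (fB _), ← map_mul]
      have hz : (⟨b ⟨i, i, Quiver.Path.nil⟩, nilB i⟩ : B) *
          (⟨b ⟨j', j', Quiver.Path.nil⟩, nilB j'⟩ : B) = 0 :=
        Subtype.ext (by rw [MulMemClass.coe_mul]; exact mul_b_ne _ _ h)
      rw [hz, map_zero, zero_mul, mul_zero]
    -- the linear extension
    let Flin : A →ₗ[k] C := b.constr k (fun z => Fval eC u z.2.2)
    have Flin_b : ∀ z : (Σ i j : V, Quiver.Path i j), Flin (b z) = Fval eC u z.2.2 :=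
      fun z => b.constr_basis k _ z
    have Fone : Flin 1 = 1 := by
      rw [hone, map_sum]
      have : ∀ i : V, Flin (b ⟨i, i, Quiver.Path.nil⟩)
          = fB ⟨b ⟨i, i, Quiver.Path.nil⟩, nilB i⟩ := fun i => by
        rw [Flin_b]
        exact Fv_zero Quiver.Path.nil (by simp)
      rw [Finset.sum_congr rfl fun i _ => this i, ← map_sum]
      rw [show (∑ i : V, (⟨b ⟨i, i, Quiver.Path.nil⟩, nilB i⟩ : B)) = 1 from
        Subtype.ext (by rw [AddSubmonoidClass.coe_finset_sum]; exact hone.symm)]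
      exact map_one fB
    have Fmul : ∀ x y : A, Flin (x * y) = Flin x * Flin y := by
      have key : ∀ z z' : (Σ i j : V, Quiver.Path i j),
          Flin (b z * b z') = Flin (b z) * Flin (b z') := by
        rintro ⟨i, j, p⟩ ⟨i', j', q⟩
        by_cases h : i = j'
        · subst h
          rw [mul_b, Flin_b, Flin_b, Flin_b]
          exact Fv_comp q p
        · rw [mul_b_ne _ _ h, map_zero, Flin_b, Flin_b]
          exact (Fv_orth p q h).symm
      let mul1 : A →ₗ[k] A →ₗ[k] C := LinearMap.mk₂ k (fun x y => Flin (x * y))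
        (fun x x' y => by beta_reduce; rw [add_mul, map_add])
        (fun c x y => by beta_reduce; rw [smul_mul_assoc, map_smul])
        (fun x y y' => by beta_reduce; rw [mul_add, map_add])
        (fun c x y => by beta_reduce; rw [mul_smul_comm, map_smul])
      let mul2 : A →ₗ[k] A →ₗ[k] C := LinearMap.mk₂ k (fun x y => Flin x * Flin y)
        (fun x x' y => by beta_reduce; rw [map_add, add_mul])
        (fun c x y => by beta_reduce; rw [map_smul, smul_mul_assoc])
        (fun x y y' => by beta_reduce; rw [map_add, mul_add])
        (fun c x y => by beta_reduce; rw [map_smul, mul_smul_comm])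
      have hmul12 : mul1 = mul2 :=
        b.ext fun z => b.ext fun z' => key z z'
      intro x y
      exact LinearMap.congr_fun (LinearMap.congr_fun hmul12 x) y
    let F : A →ₐ[k] C := AlgHom.ofLinearMap Flin Fone Fmul
    have hFB : ∀ (x : A) (hx : x ∈ Submodule.span k SB),
        Flin x = fB ⟨x, (memB' x).2 hx⟩ := by
      intro x hx
      induction hx using Submodule.span_induction with
      | mem z hz =>
          obtain ⟨i, j, p, hp, rfl⟩ := hz
          rw [Flin_b]
          exact Fv_zero p hp
      | zero =>
          have : (⟨(0 : A), (memB' (0:A)).2 (Submodule.zero_mem _)⟩ : B) = 0 := rfl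
          rw [map_zero, this, map_zero]
      | add z z' hz hz' ihz ihz' =>
          have : (⟨z + z', (memB' _).2 (Submodule.add_mem _ hz hz')⟩ : B)
              = (⟨z, (memB' z).2 hz⟩ : B) + (⟨z', (memB' z').2 hz'⟩ : B) := rfl
          rw [map_add, this, map_add, ihz, ihz']
      | smul c z hz ihz =>
          have : (⟨c • z, (memB' _).2 (Submodule.smul_mem _ c hz)⟩ : B)
              = c • (⟨z, (memB' z).2 hz⟩ : B) := rfl
          rw [map_smul, this, map_smul, ihz]
    have hFBfinal : ∀ p : B, F (p : A) = fB p := by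
      intro p
      show Flin (p : A) = fB p
      rw [hFB (p : A) ((memB' _).1 p.2)]
    have hFM : ∀ (x : A) (hx : x ∈ Submodule.span k (⇑b '' D)),
        Flin x = fM ⟨x, hMspan ▸ hx⟩ := by
      intro x hx
      induction hx using Submodule.span_induction with
      | mem z hz =>
          obtain ⟨⟨i, j, rp⟩, hzD, rfl⟩ := hz
          obtain ⟨⟨l, m, pp, aa, qq⟩, hsp, hp0⟩ := hzD
          obtain ⟨hdec, hapos, hqq0⟩ := split_spec w rp _ hsp
          have keyfn : ∀ (rp' : Quiver.Path i j) (h' : b ⟨i, j, rp'⟩ ∈ M),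
              rp' = (pp.comp aa.toPath).comp qq →
              Flin (b ⟨i, j, rp'⟩) = fM ⟨b ⟨i, j, rp'⟩, h'⟩ := by
            intro rp' h' hdec'
            subst hdec'
            rw [Flin_b]
            show Fval eC u ((pp.comp aa.toPath).comp qq) = _
            have hmid : (b ⟨i, m, pp.comp aa.toPath⟩ : A) ∈ M :=
              memM pp aa Quiver.Path.nil hp0 hapos (by simp)
            have step1 : Fval eC u (pp.comp aa.toPath)
                = fM ⟨b ⟨i, m, pp.comp aa.toPath⟩, hmid⟩ := by
              show Fval eC u (pp.cons aa) = _
              rw [Fval_cons, show u _ _ aa = fM ⟨b ⟨l, m, aa.toPath⟩, arrM aa hapos⟩ from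
                dif_pos hapos, Fv_zero pp hp0]
              exact (hR _ _ _ ((mul_b aa.toPath pp).symm)).symm
            rw [Fv_comp, step1, Fv_zero qq hqq0]
            exact (hL _ _ _ ((mul_b qq (pp.comp aa.toPath)).symm)).symm
          exact keyfn rp _ hdec
      | zero =>
          have : (⟨(0 : A), hMspan ▸ Submodule.zero_mem _⟩ : ↥M) = 0 := rfl
          rw [map_zero, this, map_zero]
      | add z z' hz hz' ihz ihz' =>
          have : (⟨z + z', hMspan ▸ Submodule.add_mem _ hz hz'⟩ : ↥M)
              = (⟨z, hMspan ▸ hz⟩ : ↥M) + (⟨z', hMspan ▸ hz'⟩ : ↥M) := rfl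
          rw [map_add, this, map_add, ihz, ihz']
      | smul c z hz ihz =>
          have : (⟨c • z, hMspan ▸ Submodule.smul_mem _ c hz⟩ : ↥M)
              = c • (⟨z, hMspan ▸ hz⟩ : ↥M) := rfl
          rw [map_smul, this, map_smul, ihz]
    have hFMfinal : ∀ x : ↥M, F (x : A) = fM x := by
      intro x
      show Flin (x : A) = fM x
      have hx : (x : A) ∈ Submodule.span k (⇑b '' D) := by
        rw [← hMspan]; exact x.2
      rw [hFM (x : A) hx]
    refine ⟨F, ⟨hFBfinal, hFMfinal⟩, ?_⟩
    rintro F' ⟨h1, h2⟩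
    have hclaim : ∀ (i j : V) (p : Quiver.Path i j), F' (b ⟨i, j, p⟩) = F (b ⟨i, j, p⟩) := by
      intro i j p
      induction p with
      | nil =>
          rw [show b ⟨i, i, Quiver.Path.nil⟩
              = ((⟨b ⟨i, i, Quiver.Path.nil⟩, nilB i⟩ : B) : A) from rfl,
            h1, hFBfinal]
      | cons p a ih =>
          rename_i l
          have hsplitb : b ⟨i, _, p.cons a⟩ = b ⟨_, _, a.toPath⟩ * b ⟨i, _, p⟩ :=
            (mul_b a.toPath p).symm
          rw [hsplitb, map_mul, map_mul, ih]
          congr 1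
          by_cases h : 0 < w _ _ a
          · rw [show b ⟨_, _, a.toPath⟩ = ((⟨b ⟨_, _, a.toPath⟩, arrM a h⟩ : ↥M) : A)
              from rfl, h2, hFMfinal]
          · rw [show b ⟨_, _, a.toPath⟩ = ((⟨b ⟨_, _, a.toPath⟩, arrB a h⟩ : B) : A)
              from rfl, h1, hFBfinal]
    apply AlgHom.toLinearMap_injective
    exact b.ext fun z => hclaim z.1 z.2.1 z.2.2
end Stmt2
end
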